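/- Let r and n be positive integers with r ≤ n. Suppose that every symmetric r×r×r tensor over ℂ whose border rank is at most r has symmetric border rank at most r. Then every symmetric n×n×n tensor over ℂ whose border rank is at most r has symmetric border rank at most r. -/

import Mathlib

/-- A tensor of format `n × n × n` is symmetric if its entries are unchanged under
every permutation of the three indices. -/
def IsSymTensor {K : Type*} [Field K] {n : ℕ} (T : Fin n → Fin n → Fin n → K) : Prop :=
  ∀ (σ : Equiv.Perm (Fin 3)) (v : Fin 3 → Fin n),
    T (v (σ 0)) (v (σ 1)) (v (σ 2)) = T (v 0) (v 1) (v 2)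

/-- The rank of an `n × n × n` tensor over `K`: the least `r` admitting a decomposition
into `r` rank-one terms. -/
noncomputable def tensorRank {K : Type*} [Field K] {n : ℕ}
    (T : Fin n → Fin n → Fin n → K) : ℕ :=
  sInf {r : ℕ | ∃ u v w : Fin r → Fin n → K,
    ∀ i j k, T i j k = ∑ s, u s i * v s j * w s k}

/-- The symmetric rank of an `n × n × n` tensor over `K`. -/
noncomputable def symTensorRank {K : Type*} [Field K] {n : ℕ}
    (T : Fin n → Fin n → Fin n → K) : ℕ :=
  sInf {r : ℕ | ∃ (lam : Fin r → K) (u : Fin r → Fin n → K),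
    ∀ i j k, T i j k = ∑ s, lam s * (u s i * u s j * u s k)}

/-- The border rank over `ℂ`: the least `r` such that `T` lies in the closure of the set
of tensors of rank at most `r`. -/
noncomputable def borderRank {n : ℕ} (T : Fin n → Fin n → Fin n → ℂ) : ℕ :=
  sInf {r : ℕ | T ∈ closure {S : Fin n → Fin n → Fin n → ℂ | tensorRank S ≤ r}}

/-- The symmetric border rank over `ℂ`: the least `r` such that `T` lies in the closure
of the set of symmetric tensors of symmetric rank at most `r`. -/
noncomputable def symBorderRank {n : ℕ} (T : Fin n → Fin n → Fin n → ℂ) : ℕ :=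
  sInf {r : ℕ | T ∈ closure
    {S : Fin n → Fin n → Fin n → ℂ | IsSymTensor S ∧ symTensorRank S ≤ r}}

namespace BRI

/-! ### Generalities -/

lemma mem_of_nat_sInf_le {s : Set ℕ} (hne : s.Nonempty)
    (hup : ∀ ⦃a b : ℕ⦄, a ∈ s → a ≤ b → b ∈ s) {r : ℕ} (h : sInf s ≤ r) : r ∈ s :=
  hup (Nat.sInf_mem hne) h

lemma sum_fin_pad {M : Type*} [AddCommMonoid M] {r' r'' : ℕ} (h : r' ≤ r'') (f : Fin r' → M) :
    ∑ s : Fin r'', (if hs : (s : ℕ) < r' then f ⟨(s : ℕ), hs⟩ else 0) = ∑ s : Fin r', f s := by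
  rw [Fin.sum_univ_eq_sum_range (fun m => if hs : m < r' then f ⟨m, hs⟩ else 0) r'']
  rw [← Finset.sum_subset (Finset.range_subset_range.2 h)
    (fun x _ hx => by rw [dif_neg (Finset.mem_range.not.1 hx)])]
  rw [← Fin.sum_univ_eq_sum_range (fun m => if hs : m < r' then f ⟨m, hs⟩ else 0) r']
  exact Finset.sum_congr rfl fun m _ => by rw [dif_pos m.isLt]

lemma closure_transport {α β : Type*} [TopologicalSpace α] [TopologicalSpace β]
    {f : α → β} (hf : Continuous f) {C : Set α} {D : Set β} (hCD : C ⊆ f ⁻¹' D)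
    {x : α} (hx : x ∈ closure C) : f x ∈ closure D :=
  (closure_mono hCD).trans (hf.closure_preimage_subset D) hx

/-! ### Symmetry via the two adjacent transpositions -/

lemma perm3_cases (σ : Equiv.Perm (Fin 3)) :
    (σ 0, σ 1, σ 2) = (0,1,2) ∨ (σ 0, σ 1, σ 2) = (0,2,1) ∨ (σ 0, σ 1, σ 2) = (1,0,2) ∨
    (σ 0, σ 1, σ 2) = (1,2,0) ∨ (σ 0, σ 1, σ 2) = (2,0,1) ∨ (σ 0, σ 1, σ 2) = (2,1,0) := by
  revert σ; decide

section SymBasics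
variable {K : Type*} [Field K] {n : ℕ} {T : Fin n → Fin n → Fin n → K}

lemma swap12 (hT : IsSymTensor T) (i j k : Fin n) : T j i k = T i j k := by
  have := hT (Equiv.swap 0 1) ![i, j, k]
  simpa [Equiv.swap_apply_def] using this

lemma swap23 (hT : IsSymTensor T) (i j k : Fin n) : T i k j = T i j k := by
  have := hT (Equiv.swap 1 2) ![i, j, k]
  simpa [Equiv.swap_apply_def] using this

lemma swap13 (hT : IsSymTensor T) (i j k : Fin n) : T k j i = T i j k := by
  have := hT (Equiv.swap 0 2) ![i, j, k]
  simpa [Equiv.swap_apply_def] using this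

lemma isSymTensor_of_swaps (h12 : ∀ i j k, T j i k = T i j k)
    (h23 : ∀ i j k, T i k j = T i j k) : IsSymTensor T := by
  have h3 : ∀ i j k, T k j i = T i j k := fun i j k => by
    rw [h12 j k i, h23 j i k, h12 i j k]
  intro σ v
  rcases perm3_cases σ with h | h | h | h | h | h <;>
    simp only [Prod.mk.injEq] at h <;> obtain ⟨e0, e1, e2⟩ := h <;> rw [e0, e1, e2]
  · exact h23 _ _ _
  · exact h12 _ _ _
  · rw [h23 (v 1) (v 0) (v 2), h12 (v 0) (v 1) (v 2)]
  · rw [h12 (v 0) (v 2) (v 1), h23 (v 0) (v 1) (v 2)]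
  · exact h3 _ _ _

end SymBasics

/-! ### Slot-wise matrix action on tensors -/

noncomputable def m1 {a b c a' : ℕ} (M : Matrix (Fin a') (Fin a) ℂ)
    (U : Fin a → Fin b → Fin c → ℂ) : Fin a' → Fin b → Fin c → ℂ :=
  fun x j k => ∑ i, M x i * U i j k

noncomputable def m2 {a b c b' : ℕ} (M : Matrix (Fin b') (Fin b) ℂ)
    (U : Fin a → Fin b → Fin c → ℂ) : Fin a → Fin b' → Fin c → ℂ :=
  fun i y k => ∑ j, M y j * U i j k

noncomputable def m3 {a b c c' : ℕ} (M : Matrix (Fin c') (Fin c) ℂ)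
    (U : Fin a → Fin b → Fin c → ℂ) : Fin a → Fin b → Fin c' → ℂ :=
  fun i j z => ∑ k, M z k * U i j k

lemma m1_continuous {a b c a' : ℕ} (M : Matrix (Fin a') (Fin a) ℂ) :
    Continuous (fun U : Fin a → Fin b → Fin c → ℂ => m1 M U) := by
  refine continuous_pi fun x => continuous_pi fun j => continuous_pi fun k => ?_
  refine continuous_finset_sum _ fun i _ => Continuous.mul continuous_const ?_
  exact (continuous_apply k).comp ((continuous_apply j).comp (continuous_apply i))

lemma m2_continuous {a b c b' : ℕ} (M : Matrix (Fin b') (Fin b) ℂ) :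
    Continuous (fun U : Fin a → Fin b → Fin c → ℂ => m2 M U) := by
  refine continuous_pi fun i => continuous_pi fun y => continuous_pi fun k => ?_
  refine continuous_finset_sum _ fun j _ => Continuous.mul continuous_const ?_
  exact (continuous_apply k).comp ((continuous_apply j).comp (continuous_apply i))

lemma m3_continuous {a b c c' : ℕ} (M : Matrix (Fin c') (Fin c) ℂ) :
    Continuous (fun U : Fin a → Fin b → Fin c → ℂ => m3 M U) := by
  refine continuous_pi fun i => continuous_pi fun j => continuous_pi fun z => ?_
  refine continuous_finset_sum _ fun k _ => Continuous.mul continuous_const ?_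
  exact (continuous_apply k).comp ((continuous_apply j).comp (continuous_apply i))

section decomp
variable {a b c a' r : ℕ} {U : Fin a → Fin b → Fin c → ℂ}

lemma m1_decomp (M : Matrix (Fin a') (Fin a) ℂ) (lam : Fin r → ℂ)
    (u : Fin r → Fin a → ℂ) (v : Fin r → Fin b → ℂ) (w : Fin r → Fin c → ℂ)
    (hU : ∀ i j k, U i j k = ∑ s, lam s * (u s i * v s j * w s k)) :
    ∀ x j k, m1 M U x j k = ∑ s, lam s * (M.mulVec (u s) x * v s j * w s k) := by
  intro x j k
  calc ∑ i, M x i * U i j k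
      = ∑ i, ∑ s, M x i * (lam s * (u s i * v s j * w s k)) := by
        simp only [hU, Finset.mul_sum]
    _ = ∑ s, ∑ i, M x i * (lam s * (u s i * v s j * w s k)) := Finset.sum_comm
    _ = ∑ s, lam s * (M.mulVec (u s) x * v s j * w s k) := by
        refine Finset.sum_congr rfl fun s _ => ?_
        rw [Matrix.mulVec, dotProduct]
        rw [show lam s * ((∑ i, M x i * u s i) * v s j * w s k)
            = ∑ i, (lam s * (v s j * w s k)) * (M x i * u s i) by
          rw [← Finset.mul_sum]; ring]
        exact Finset.sum_congr rfl fun i _ => by ring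

lemma m2_decomp (M : Matrix (Fin a') (Fin b) ℂ) (lam : Fin r → ℂ)
    (u : Fin r → Fin a → ℂ) (v : Fin r → Fin b → ℂ) (w : Fin r → Fin c → ℂ)
    (hU : ∀ i j k, U i j k = ∑ s, lam s * (u s i * v s j * w s k)) :
    ∀ i y k, m2 M U i y k = ∑ s, lam s * (u s i * M.mulVec (v s) y * w s k) := by
  intro i y k
  calc ∑ j, M y j * U i j k
      = ∑ j, ∑ s, M y j * (lam s * (u s i * v s j * w s k)) := by
        simp only [hU, Finset.mul_sum]
    _ = ∑ s, ∑ j, M y j * (lam s * (u s i * v s j * w s k)) := Finset.sum_comm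
    _ = ∑ s, lam s * (u s i * M.mulVec (v s) y * w s k) := by
        refine Finset.sum_congr rfl fun s _ => ?_
        rw [Matrix.mulVec, dotProduct]
        rw [show lam s * (u s i * (∑ j, M y j * v s j) * w s k)
            = ∑ j, (lam s * (u s i * w s k)) * (M y j * v s j) by
          rw [← Finset.mul_sum]; ring]
        exact Finset.sum_congr rfl fun j _ => by ring

lemma m3_decomp (M : Matrix (Fin a') (Fin c) ℂ) (lam : Fin r → ℂ)
    (u : Fin r → Fin a → ℂ) (v : Fin r → Fin b → ℂ) (w : Fin r → Fin c → ℂ)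
    (hU : ∀ i j k, U i j k = ∑ s, lam s * (u s i * v s j * w s k)) :
    ∀ i j z, m3 M U i j z = ∑ s, lam s * (u s i * v s j * M.mulVec (w s) z) := by
  intro i j z
  calc ∑ k, M z k * U i j k
      = ∑ k, ∑ s, M z k * (lam s * (u s i * v s j * w s k)) := by
        simp only [hU, Finset.mul_sum]
    _ = ∑ s, ∑ k, M z k * (lam s * (u s i * v s j * w s k)) := Finset.sum_comm
    _ = ∑ s, lam s * (u s i * v s j * M.mulVec (w s) z) := by
        refine Finset.sum_congr rfl fun s _ => ?_
        rw [Matrix.mulVec, dotProduct]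
        rw [show lam s * (u s i * v s j * ∑ k, M z k * w s k)
            = ∑ k, (lam s * (u s i * v s j)) * (M z k * w s k) by
          rw [← Finset.mul_sum]; ring]
        exact Finset.sum_congr rfl fun k _ => by ring

end decomp

section commute
variable {a b c : ℕ}

lemma m3_m1 {a' c' : ℕ} (N : Matrix (Fin c') (Fin c) ℂ) (M : Matrix (Fin a') (Fin a) ℂ)
    (U : Fin a → Fin b → Fin c → ℂ) : m3 N (m1 M U) = m1 M (m3 N U) := by
  funext i j z
  simp only [m1, m3, Finset.mul_sum]
  rw [Finset.sum_comm]
  exact Finset.sum_congr rfl fun _ _ => Finset.sum_congr rfl fun _ _ => by ring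

lemma m3_m2 {b' c' : ℕ} (N : Matrix (Fin c') (Fin c) ℂ) (M : Matrix (Fin b') (Fin b) ℂ)
    (U : Fin a → Fin b → Fin c → ℂ) : m3 N (m2 M U) = m2 M (m3 N U) := by
  funext i y z
  simp only [m2, m3, Finset.mul_sum]
  rw [Finset.sum_comm]
  exact Finset.sum_congr rfl fun _ _ => Finset.sum_congr rfl fun _ _ => by ring

lemma m2_m1 {a' b' : ℕ} (N : Matrix (Fin b') (Fin b) ℂ) (M : Matrix (Fin a') (Fin a) ℂ)
    (U : Fin a → Fin b → Fin c → ℂ) : m2 N (m1 M U) = m1 M (m2 N U) := by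
  funext x y k
  simp only [m1, m2, Finset.mul_sum]
  rw [Finset.sum_comm]
  exact Finset.sum_congr rfl fun _ _ => Finset.sum_congr rfl fun _ _ => by ring

lemma m1_m1 {a' a'' : ℕ} (N : Matrix (Fin a'') (Fin a') ℂ) (M : Matrix (Fin a') (Fin a) ℂ)
    (U : Fin a → Fin b → Fin c → ℂ) : m1 N (m1 M U) = m1 (N * M) U := by
  funext x j k
  simp only [m1, Finset.mul_sum, Matrix.mul_apply, Finset.sum_mul]
  rw [Finset.sum_comm]
  exact Finset.sum_congr rfl fun _ _ => Finset.sum_congr rfl fun _ _ => by ring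

lemma m2_m2 {b' b'' : ℕ} (N : Matrix (Fin b'') (Fin b') ℂ) (M : Matrix (Fin b') (Fin b) ℂ)
    (U : Fin a → Fin b → Fin c → ℂ) : m2 N (m2 M U) = m2 (N * M) U := by
  funext i y k
  simp only [m2, Finset.mul_sum, Matrix.mul_apply, Finset.sum_mul]
  rw [Finset.sum_comm]
  exact Finset.sum_congr rfl fun _ _ => Finset.sum_congr rfl fun _ _ => by ring

lemma m3_m3 {c' c'' : ℕ} (N : Matrix (Fin c'') (Fin c') ℂ) (M : Matrix (Fin c') (Fin c) ℂ)
    (U : Fin a → Fin b → Fin c → ℂ) : m3 N (m3 M U) = m3 (N * M) U := by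
  funext i j z
  simp only [m3, Finset.mul_sum, Matrix.mul_apply, Finset.sum_mul]
  rw [Finset.sum_comm]
  exact Finset.sum_congr rfl fun _ _ => Finset.sum_congr rfl fun _ _ => by ring

end commute

/-! ### Delta collapse and polarization -/

noncomputable def sgl {n : ℕ} (a : Fin n) : Fin n → ℂ := Pi.single a 1

lemma collapse1 {n : ℕ} (f : Fin n → Fin n → Fin n → ℂ) (i j k : Fin n) :
    ∑ a, ∑ b, ∑ c, f a b c * (sgl a i * sgl b j * sgl c k) = f i j k := by
  simp [sgl, Pi.single_apply, mul_ite, ite_mul, Finset.sum_ite_eq', Finset.mem_univ]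

lemma collapse2 {n : ℕ} (f : Fin n → Fin n → Fin n → ℂ) (i j k : Fin n) :
    ∑ a, ∑ b, ∑ c, f a b c * (sgl a i * sgl c j * sgl b k) = f i k j := by
  simp [sgl, Pi.single_apply, mul_ite, ite_mul, Finset.sum_ite_eq', Finset.mem_univ]

lemma collapse3 {n : ℕ} (f : Fin n → Fin n → Fin n → ℂ) (i j k : Fin n) :
    ∑ a, ∑ b, ∑ c, f a b c * (sgl b i * sgl a j * sgl c k) = f j i k := by
  simp [sgl, Pi.single_apply, mul_ite, ite_mul, Finset.sum_ite_eq', Finset.mem_univ]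

lemma collapse4 {n : ℕ} (f : Fin n → Fin n → Fin n → ℂ) (i j k : Fin n) :
    ∑ a, ∑ b, ∑ c, f a b c * (sgl b i * sgl c j * sgl a k) = f k i j := by
  simp [sgl, Pi.single_apply, mul_ite, ite_mul, Finset.sum_ite_eq', Finset.mem_univ]

lemma collapse5 {n : ℕ} (f : Fin n → Fin n → Fin n → ℂ) (i j k : Fin n) :
    ∑ a, ∑ b, ∑ c, f a b c * (sgl c i * sgl a j * sgl b k) = f j k i := by
  simp [sgl, Pi.single_apply, mul_ite, ite_mul, Finset.sum_ite_eq', Finset.mem_univ]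

lemma collapse6 {n : ℕ} (f : Fin n → Fin n → Fin n → ℂ) (i j k : Fin n) :
    ∑ a, ∑ b, ∑ c, f a b c * (sgl c i * sgl b j * sgl a k) = f k j i := by
  simp [sgl, Pi.single_apply, mul_ite, ite_mul, Finset.sum_ite_eq', Finset.mem_univ]

lemma sym_finite_symrank {n : ℕ} (T : Fin n → Fin n → Fin n → ℂ) (hT : IsSymTensor T) :
    ∃ (N : ℕ) (lam : Fin N → ℂ) (u : Fin N → Fin n → ℂ),
      ∀ i j k, T i j k = ∑ s, lam s * (u s i * u s j * u s k) := by
  classical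
  let ι := Fin n × Fin n × Fin n × Fin 7
  let pm : Fin 7 → ℂ := ![1, -1, -1, -1, 1, 1, 1]
  let vec : Fin n → Fin n → Fin n → Fin 7 → Fin n → ℂ := fun a b c =>
    ![sgl a + sgl b + sgl c, sgl a + sgl b, sgl a + sgl c, sgl b + sgl c, sgl a, sgl b, sgl c]
  let lam' : ι → ℂ := fun q => pm q.2.2.2 * T q.1 q.2.1 q.2.2.1 / 6
  let u' : ι → Fin n → ℂ := fun q => vec q.1 q.2.1 q.2.2.1 q.2.2.2
  let e := Fintype.equivFin ι
  refine ⟨Fintype.card ι, lam' ∘ e.symm, u' ∘ e.symm, fun i j k => ?_⟩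
  have h0 : ∑ s, (lam' ∘ e.symm) s * ((u' ∘ e.symm) s i * (u' ∘ e.symm) s j * (u' ∘ e.symm) s k)
      = ∑ q : ι, lam' q * (u' q i * u' q j * u' q k) :=
    Equiv.sum_comp e.symm (fun q => lam' q * (u' q i * u' q j * u' q k))
  rw [h0]
  have h1 : ∑ q : ι, lam' q * (u' q i * u' q j * u' q k)
      = ∑ a, ∑ b, ∑ c, ∑ t : Fin 7, lam' (a, b, c, t) * (u' (a,b,c,t) i * u' (a,b,c,t) j * u' (a,b,c,t) k) := by
    simp [ι, Fintype.sum_prod_type]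
  rw [h1]
  have key : ∀ a b c : Fin n, (∑ t : Fin 7,
      lam' (a,b,c,t) * (u' (a,b,c,t) i * u' (a,b,c,t) j * u' (a,b,c,t) k))
      = (fun a b c => T a b c / 6) a b c * (sgl a i * sgl b j * sgl c k)
      + ((fun a b c => T a b c / 6) a b c * (sgl a i * sgl c j * sgl b k)
      + ((fun a b c => T a b c / 6) a b c * (sgl b i * sgl a j * sgl c k)
      + ((fun a b c => T a b c / 6) a b c * (sgl b i * sgl c j * sgl a k)
      + ((fun a b c => T a b c / 6) a b c * (sgl c i * sgl a j * sgl b k)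
      + (fun a b c => T a b c / 6) a b c * (sgl c i * sgl b j * sgl a k))))) := by
    intro a b c
    simp only [lam', u', vec, pm, Fin.sum_univ_seven]
    simp only [Matrix.cons_val_zero, Matrix.cons_val_one, Matrix.head_cons,
      Matrix.cons_val_two, Matrix.tail_cons, Matrix.cons_val_three, Matrix.cons_val_four,
      Matrix.cons_val_fin_one]
    rw [show (![sgl a + sgl b + sgl c, sgl a + sgl b, sgl a + sgl c, sgl b + sgl c,
        sgl a, sgl b, sgl c] : Fin 7 → Fin n → ℂ) 5 = sgl b from rfl,
      show (![sgl a + sgl b + sgl c, sgl a + sgl b, sgl a + sgl c, sgl b + sgl c,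
        sgl a, sgl b, sgl c] : Fin 7 → Fin n → ℂ) 6 = sgl c from rfl,
      show (![1, -1, -1, -1, 1, 1, 1] : Fin 7 → ℂ) 5 = 1 from rfl,
      show (![1, -1, -1, -1, 1, 1, 1] : Fin 7 → ℂ) 6 = 1 from rfl]
    simp only [Pi.add_apply]
    ring
  symm
  calc ∑ a, ∑ b, ∑ c, ∑ t : Fin 7, lam' (a,b,c,t) * (u' (a,b,c,t) i * u' (a,b,c,t) j * u' (a,b,c,t) k)
      = ∑ a, ∑ b, ∑ c, ((fun a b c => T a b c / 6) a b c * (sgl a i * sgl b j * sgl c k)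
      + ((fun a b c => T a b c / 6) a b c * (sgl a i * sgl c j * sgl b k)
      + ((fun a b c => T a b c / 6) a b c * (sgl b i * sgl a j * sgl c k)
      + ((fun a b c => T a b c / 6) a b c * (sgl b i * sgl c j * sgl a k)
      + ((fun a b c => T a b c / 6) a b c * (sgl c i * sgl a j * sgl b k)
      + (fun a b c => T a b c / 6) a b c * (sgl c i * sgl b j * sgl a k)))))) := by
        exact Finset.sum_congr rfl fun a _ => Finset.sum_congr rfl fun b _ =>
          Finset.sum_congr rfl fun c _ => key a b c
    _ = T i j k := by
        simp only [Finset.sum_add_distrib]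
        rw [collapse1 (fun a b c => T a b c / 6), collapse2 (fun a b c => T a b c / 6),
          collapse3 (fun a b c => T a b c / 6), collapse4 (fun a b c => T a b c / 6),
          collapse5 (fun a b c => T a b c / 6), collapse6 (fun a b c => T a b c / 6)]
        rw [show T i k j = T i j k from swap23 hT i j k,
          show T j i k = T i j k from swap12 hT i j k,
          show T k i j = T i j k from by rw [swap12 hT i k j, swap23 hT i j k],
          show T j k i = T i j k from by rw [swap23 hT j i k, swap12 hT i j k],
          show T k j i = T i j k from by
            rw [swap12 hT j k i, swap23 hT j i k, swap12 hT i j k]]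
        ring

/-! ### Rank-set utilities -/

lemma RS_up {n r' r'' : ℕ} (h : r' ≤ r'') {U : Fin n → Fin n → Fin n → ℂ}
    (hU : ∃ u v w : Fin r' → Fin n → ℂ, ∀ i j k, U i j k = ∑ s, u s i * v s j * w s k) :
    ∃ u v w : Fin r'' → Fin n → ℂ, ∀ i j k, U i j k = ∑ s, u s i * v s j * w s k := by
  obtain ⟨u, v, w, hd⟩ := hU
  refine ⟨fun s => if hs : (s : ℕ) < r' then u ⟨s, hs⟩ else 0,
    fun s => if hs : (s : ℕ) < r' then v ⟨s, hs⟩ else 0,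
    fun s => if hs : (s : ℕ) < r' then w ⟨s, hs⟩ else 0, fun i j k => ?_⟩
  rw [hd i j k, ← sum_fin_pad h (fun s : Fin r' => u s i * v s j * w s k)]
  refine Finset.sum_congr rfl fun s _ => ?_
  by_cases hs : (s : ℕ) < r' <;> simp [hs]

lemma SS_up {n r' r'' : ℕ} (h : r' ≤ r'') {U : Fin n → Fin n → Fin n → ℂ}
    (hU : ∃ (lam : Fin r' → ℂ) (u : Fin r' → Fin n → ℂ),
      ∀ i j k, U i j k = ∑ s, lam s * (u s i * u s j * u s k)) :
    ∃ (lam : Fin r'' → ℂ) (u : Fin r'' → Fin n → ℂ),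
      ∀ i j k, U i j k = ∑ s, lam s * (u s i * u s j * u s k) := by
  obtain ⟨lam, u, hd⟩ := hU
  refine ⟨fun s => if hs : (s : ℕ) < r' then lam ⟨s, hs⟩ else 0,
    fun s => if hs : (s : ℕ) < r' then u ⟨s, hs⟩ else 0, fun i j k => ?_⟩
  rw [hd i j k, ← sum_fin_pad h (fun s : Fin r' => lam s * (u s i * u s j * u s k))]
  refine Finset.sum_congr rfl fun s _ => ?_
  by_cases hs : (s : ℕ) < r' <;> simp [hs]

lemma RS_nn {n : ℕ} (U : Fin n → Fin n → Fin n → ℂ) :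
    ∃ u v w : Fin (n * n) → Fin n → ℂ, ∀ i j k, U i j k = ∑ s, u s i * v s j * w s k := by
  classical
  let e : Fin n × Fin n ≃ Fin (n * n) := finProdFinEquiv
  refine ⟨fun s => (fun i => U i (e.symm s).1 (e.symm s).2),
    fun s => sgl (e.symm s).1, fun s => sgl (e.symm s).2, fun i j k => ?_⟩
  rw [Equiv.sum_comp e.symm
    (fun q : Fin n × Fin n => (fun i' => U i' q.1 q.2) i * sgl q.1 j * sgl q.2 k)]
  rw [Fintype.sum_prod_type]
  simp [sgl, Pi.single_apply, mul_ite, ite_mul, Finset.sum_ite_eq', Finset.mem_univ]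

lemma tensorRank_le_iff {n : ℕ} (U : Fin n → Fin n → Fin n → ℂ) (ρ : ℕ) :
    tensorRank U ≤ ρ ↔
      ∃ u v w : Fin ρ → Fin n → ℂ, ∀ i j k, U i j k = ∑ s, u s i * v s j * w s k := by
  constructor
  · intro h
    exact mem_of_nat_sInf_le (s := {r : ℕ | ∃ u v w : Fin r → Fin n → ℂ,
        ∀ i j k, U i j k = ∑ s, u s i * v s j * w s k})
      ⟨n * n, RS_nn U⟩ (fun a b ha hab => RS_up hab ha) h
  · intro h
    exact Nat.sInf_le h

lemma symTensorRank_le {n ρ : ℕ} {U : Fin n → Fin n → Fin n → ℂ}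
    (h : ∃ (lam : Fin ρ → ℂ) (u : Fin ρ → Fin n → ℂ),
      ∀ i j k, U i j k = ∑ s, lam s * (u s i * u s j * u s k)) :
    symTensorRank U ≤ ρ :=
  Nat.sInf_le h

lemma exists_symdecomp_of_le {n ρ : ℕ} {U : Fin n → Fin n → Fin n → ℂ}
    (hsym : IsSymTensor U) (h : symTensorRank U ≤ ρ) :
    ∃ (lam : Fin ρ → ℂ) (u : Fin ρ → Fin n → ℂ),
      ∀ i j k, U i j k = ∑ s, lam s * (u s i * u s j * u s k) := by
  obtain ⟨N, lam, u, hd⟩ := sym_finite_symrank U hsym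
  exact mem_of_nat_sInf_le (s := {r : ℕ | ∃ (lam : Fin r → ℂ) (u : Fin r → Fin n → ℂ),
      ∀ i j k, U i j k = ∑ s, lam s * (u s i * u s j * u s k)})
    ⟨N, lam, u, hd⟩ (fun a b ha hab => SS_up hab ha) h

lemma sym_of_symdecomp {n ρ : ℕ} {U : Fin n → Fin n → Fin n → ℂ}
    (h : ∃ (lam : Fin ρ → ℂ) (u : Fin ρ → Fin n → ℂ),
      ∀ i j k, U i j k = ∑ s, lam s * (u s i * u s j * u s k)) :
    IsSymTensor U := by
  obtain ⟨lam, u, hd⟩ := h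
  refine isSymTensor_of_swaps (fun i j k => ?_) (fun i j k => ?_) <;>
    rw [hd, hd] <;> exact Finset.sum_congr rfl fun s _ => by ring

/-! ### Entry formula and symmetry of the compressed tensor -/

lemma m123_entry {n m : ℕ} (P : Matrix (Fin m) (Fin n) ℂ) (T : Fin n → Fin n → Fin n → ℂ)
    (a b c : Fin m) :
    m1 P (m2 P (m3 P T)) a b c = ∑ i, ∑ j, ∑ k, P a i * P b j * P c k * T i j k := by
  simp only [m1, m2, m3, Finset.mul_sum]
  exact Finset.sum_congr rfl fun i _ => Finset.sum_congr rfl fun j _ =>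
    Finset.sum_congr rfl fun k _ => by ring

lemma m123_sym {n m : ℕ} (P : Matrix (Fin m) (Fin n) ℂ) {T : Fin n → Fin n → Fin n → ℂ}
    (hsym : IsSymTensor T) : IsSymTensor (m1 P (m2 P (m3 P T))) := by
  refine isSymTensor_of_swaps (fun a b c => ?_) (fun a b c => ?_)
  · rw [m123_entry, m123_entry, Finset.sum_comm]
    refine Finset.sum_congr rfl fun i _ => Finset.sum_congr rfl fun j _ =>
      Finset.sum_congr rfl fun k _ => ?_
    rw [show T j i k = T i j k from swap12 hsym i j k]; ring
  · rw [m123_entry, m123_entry]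
    refine Finset.sum_congr rfl fun i _ => ?_
    rw [Finset.sum_comm]
    refine Finset.sum_congr rfl fun j _ => Finset.sum_congr rfl fun k _ => ?_
    rw [show T i k j = T i j k from swap23 hsym i j k]; ring

/-! ### Identity lemmas -/

lemma m1_id {n : ℕ} {R : Matrix (Fin n) (Fin n) ℂ} {A : Submodule ℂ (Fin n → ℂ)}
    (hR : ∀ x ∈ A, R.mulVec x = x) {T : Fin n → Fin n → Fin n → ℂ}
    (h : ∀ j k, (fun i => T i j k) ∈ A) : m1 R T = T := by
  funext x j k
  have := congrFun (hR _ (h j k)) x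
  simpa [Matrix.mulVec, dotProduct, m1] using this

lemma m2_id {n : ℕ} {R : Matrix (Fin n) (Fin n) ℂ} {A : Submodule ℂ (Fin n → ℂ)}
    (hR : ∀ x ∈ A, R.mulVec x = x) {T : Fin n → Fin n → Fin n → ℂ}
    (h : ∀ i k, (fun j => T i j k) ∈ A) : m2 R T = T := by
  funext i y k
  have := congrFun (hR _ (h i k)) y
  simpa [Matrix.mulVec, dotProduct, m2] using this

lemma m3_id {n : ℕ} {R : Matrix (Fin n) (Fin n) ℂ} {A : Submodule ℂ (Fin n → ℂ)}
    (hR : ∀ x ∈ A, R.mulVec x = x) {T : Fin n → Fin n → Fin n → ℂ}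
    (h : ∀ i j, (fun k => T i j k) ∈ A) : m3 R T = T := by
  funext i j z
  have := congrFun (hR _ (h i j)) z
  simpa [Matrix.mulVec, dotProduct, m3] using this

/-! ### The span-of-slices bound and the compression matrices -/

lemma span_slices_finrank_le {n r : ℕ} (T : Fin n → Fin n → Fin n → ℂ)
    (hT : T ∈ closure {S : Fin n → Fin n → Fin n → ℂ | ∃ u v w : Fin r → Fin n → ℂ,
      ∀ i j k, S i j k = ∑ s, u s i * v s j * w s k}) :
    Module.finrank ℂ (Submodule.span ℂ
      (Set.range (fun p : Fin n × Fin n => (fun i => T i p.1 p.2)))) ≤ r := by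
  classical
  set sl : Fin n × Fin n → (Fin n → ℂ) := fun p => (fun i => T i p.1 p.2) with hsl
  by_contra hcon
  push_neg at hcon
  obtain ⟨b, hbsub, hbspan, hbind⟩ := exists_linearIndependent ℂ (Set.range sl)
  have hbfin : b.Finite := (Set.finite_range sl).subset hbsub
  haveI := hbfin.fintype
  have hcard : r + 1 ≤ Fintype.card b := by
    have : Module.finrank ℂ (Submodule.span ℂ b) = b.toFinset.card :=
      finrank_span_set_eq_card hbind
    rw [hbspan] at this
    have h2 : r + 1 ≤ b.toFinset.card := by omega
    simpa [Set.toFinset_card] using h2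
  obtain ⟨emb⟩ := Function.Embedding.nonempty_of_card_le (by simpa using hcard :
    Fintype.card (Fin (r+1)) ≤ Fintype.card b)
  have hindemb : LinearIndependent ℂ (fun m : Fin (r+1) => (emb m : Fin n → ℂ)) :=
    hbind.comp emb emb.injective
  have hchoice : ∀ m : Fin (r+1), ∃ p : Fin n × Fin n, sl p = (emb m : Fin n → ℂ) :=
    fun m => hbsub (emb m).2
  choose g hg using hchoice
  have hindT : LinearIndependent ℂ (fun m : Fin (r+1) => sl (g m)) := by
    rw [show (fun m : Fin (r+1) => sl (g m)) = fun m => (emb m : Fin n → ℂ) from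
      funext fun m => hg m]
    exact hindemb
  have hcont : Continuous (fun S : Fin n → Fin n → Fin n → ℂ =>
      (fun m : Fin (r+1) => (fun i => S i (g m).1 (g m).2))) := by
    refine continuous_pi fun m => continuous_pi fun i => ?_
    exact (continuous_apply (g m).2).comp
      ((continuous_apply (g m).1).comp (continuous_apply i))
  have hO : IsOpen {S : Fin n → Fin n → Fin n → ℂ |
      LinearIndependent ℂ (fun m : Fin (r+1) => (fun i => S i (g m).1 (g m).2))} :=
    isOpen_setOf_linearIndependent.preimage hcont
  obtain ⟨S, hSind, hSrk⟩ := mem_closure_iff.1 hT _ hO hindT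
  obtain ⟨u, v, w, hd⟩ := hSrk
  set W := Submodule.span ℂ (Set.range u) with hW
  have hWfin : Module.finrank ℂ W ≤ r := by
    simpa [Set.finrank] using finrank_range_le_card u
  have hmem : ∀ m : Fin (r+1), (fun i => S i (g m).1 (g m).2) ∈ W := by
    intro m
    have : (fun i => S i (g m).1 (g m).2)
        = ∑ s, (v s (g m).1 * w s (g m).2) • u s := by
      funext i
      rw [hd]
      rw [Finset.sum_apply]
      exact Finset.sum_congr rfl fun s _ => by simp [smul_eq_mul]; ring
    rw [this]
    exact Submodule.sum_mem _ fun s _ => Submodule.smul_mem _ _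
      (Submodule.subset_span (Set.mem_range_self s))
  let f' : Fin (r+1) → W := fun m => ⟨_, hmem m⟩
  have hindf' : LinearIndependent ℂ f' := by
    apply LinearIndependent.of_comp W.subtype
    exact hSind
  have := hindf'.fintype_card_le_finrank
  simp only [Fintype.card_fin] at this
  omega

lemma exists_PQ {n r : ℕ} (A : Submodule ℂ (Fin n → ℂ)) (hA : Module.finrank ℂ A ≤ r) :
    ∃ (P : Matrix (Fin r) (Fin n) ℂ) (Q : Matrix (Fin n) (Fin r) ℂ),
      ∀ x ∈ A, Q.mulVec (P.mulVec x) = x := by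
  classical
  set d := Module.finrank ℂ A with hd
  let bA := Module.finBasis ℂ A
  let v : Fin r → A := fun a => if h : (a : ℕ) < d then bA ⟨a, h⟩ else 0
  have hspan : Submodule.span ℂ (Set.range v) = ⊤ := by
    rw [← top_le_iff, ← bA.span_eq]
    refine Submodule.span_mono ?_
    rintro x ⟨t, rfl⟩
    refine ⟨⟨(t : ℕ), lt_of_lt_of_le t.isLt hA⟩, ?_⟩
    simp only [v, dif_pos t.isLt, Fin.eta]
    exact dif_pos t.isLt
  let Tot : (Fin r → ℂ) →ₗ[ℂ] A := Fintype.linearCombination ℂ v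
  have hTot : LinearMap.range Tot = ⊤ := by
    rw [Fintype.range_linearCombination, hspan]
  obtain ⟨g, hg⟩ := Tot.exists_rightInverse_of_surjective hTot
  obtain ⟨A', hcompl⟩ := Submodule.exists_isCompl A
  let π := A.linearProjOfIsCompl A' hcompl
  refine ⟨LinearMap.toMatrix' (g ∘ₗ π), LinearMap.toMatrix' (A.subtype ∘ₗ Tot),
    fun x hx => ?_⟩
  rw [← Matrix.toLin'_apply, ← Matrix.toLin'_apply, Matrix.toLin'_toMatrix',
    Matrix.toLin'_toMatrix']
  have hπ : π x = ⟨x, hx⟩ := by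
    have := Submodule.linearProjOfIsCompl_apply_left hcompl (⟨x, hx⟩ : A)
    exact this
  simp only [LinearMap.comp_apply, hπ]
  have : Tot (g ⟨x, hx⟩) = ⟨x, hx⟩ := by
    have := LinearMap.congr_fun hg (⟨x, hx⟩ : A)
    simpa using this
  rw [this]
  rfl

end BRI


/-- Inheritance: if border rank and symmetric border rank agree for `r × r × r` tensors of
border rank `r`, then they agree for `n × n × n` tensors of border rank `r`, all `n ≥ r`. -/
theorem borderRank_inheritance (r n : ℕ) (hr : 0 < r) (hn : 0 < n) (hrn : r ≤ n)
    (H : ∀ S : Fin r → Fin r → Fin r → ℂ, IsSymTensor S → borderRank S ≤ r →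
      symBorderRank S ≤ r) :
    ∀ T : Fin n → Fin n → Fin n → ℂ, IsSymTensor T → borderRank T ≤ r →
      symBorderRank T ≤ r := by
  classical
  intro T hTsym hTbr
  -- Step 1: closure membership, in explicit-decomposition form
  have hsetEq : ∀ (m : ℕ), {S : Fin m → Fin m → Fin m → ℂ | tensorRank S ≤ r}
      = {S : Fin m → Fin m → Fin m → ℂ | ∃ u v w : Fin r → Fin m → ℂ,
          ∀ i j k, S i j k = ∑ s, u s i * v s j * w s k} :=
    fun m => Set.ext fun S => BRI.tensorRank_le_iff S r
  have hTcl : T ∈ closure {S : Fin n → Fin n → Fin n → ℂ | tensorRank S ≤ r} := by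
    have hne : ({ρ : ℕ | T ∈ closure
        {S : Fin n → Fin n → Fin n → ℂ | tensorRank S ≤ ρ}}).Nonempty :=
      ⟨n * n, subset_closure (show tensorRank T ≤ n * n from Nat.sInf_le (BRI.RS_nn T))⟩
    exact BRI.mem_of_nat_sInf_le hne
      (fun a b ha hab => closure_mono (fun S hS => le_trans hS hab) ha) hTbr
  rw [hsetEq n] at hTcl
  -- Step 2: the span of the slices of `T` has dimension at most `r`
  set A := Submodule.span ℂ
    (Set.range (fun p : Fin n × Fin n => (fun i => T i p.1 p.2))) with hAdef
  have hA : Module.finrank ℂ A ≤ r := BRI.span_slices_finrank_le T hTcl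
  have hA1 : ∀ j k, (fun i => T i j k) ∈ A := fun j k =>
    Submodule.subset_span ⟨(j, k), rfl⟩
  have hA2 : ∀ i k, (fun j => T i j k) ∈ A := by
    intro i k
    have h : (fun j => T i j k) = (fun j => T j i k) :=
      funext fun j => BRI.swap12 hTsym j i k
    rw [h]
    exact Submodule.subset_span ⟨(i, k), rfl⟩
  have hA3 : ∀ i j, (fun k => T i j k) ∈ A := by
    intro i j
    have h : (fun k => T i j k) = (fun k => T k j i) :=
      funext fun k => (BRI.swap13 hTsym i j k).symm
    rw [h]
    exact Submodule.subset_span ⟨(j, i), rfl⟩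
  obtain ⟨P, Q, hPQ⟩ := BRI.exists_PQ A hA
  have hR : ∀ x ∈ A, (Q * P).mulVec x = x := fun x hx => by
    rw [← Matrix.mulVec_mulVec]; exact hPQ x hx
  set S := BRI.m1 P (BRI.m2 P (BRI.m3 P T)) with hSdef
  -- Step 3: `S` is symmetric with border rank at most `r`
  have hSsym : IsSymTensor S := BRI.m123_sym P hTsym
  have hLcont : Continuous
      (fun U : Fin n → Fin n → Fin n → ℂ => BRI.m1 P (BRI.m2 P (BRI.m3 P U))) :=
    (BRI.m1_continuous P).comp ((BRI.m2_continuous P).comp (BRI.m3_continuous P))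
  have hScl : S ∈ closure {S' : Fin r → Fin r → Fin r → ℂ | tensorRank S' ≤ r} := by
    refine BRI.closure_transport hLcont ?_ hTcl
    intro U hU
    obtain ⟨u, v, w, hd⟩ := hU
    have hd' : ∀ i j k, U i j k
        = ∑ s : Fin r, (fun _ : Fin r => (1 : ℂ)) s * (u s i * v s j * w s k) := by
      intro i j k
      rw [hd]
      exact Finset.sum_congr rfl fun s _ => by ring
    have h3 := BRI.m3_decomp P _ u v w hd'
    have h2 := BRI.m2_decomp P _ u _ _ h3
    have h1 := BRI.m1_decomp P _ _ _ _ h2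
    show tensorRank (BRI.m1 P (BRI.m2 P (BRI.m3 P U))) ≤ r
    rw [BRI.tensorRank_le_iff]
    refine ⟨fun s => P.mulVec (u s), fun s => P.mulVec (v s), fun s => P.mulVec (w s),
      fun a b c => ?_⟩
    rw [h1 a b c]
    exact Finset.sum_congr rfl fun s _ => by ring
  have hSbr : borderRank S ≤ r := Nat.sInf_le hScl
  -- Step 4: apply the hypothesis `H` and unpack
  have hH := H S hSsym hSbr
  have hSsymcl : S ∈ closure {S' : Fin r → Fin r → Fin r → ℂ |
      IsSymTensor S' ∧ symTensorRank S' ≤ r} := by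
    have hne : ({ρ : ℕ | S ∈ closure {S' : Fin r → Fin r → Fin r → ℂ |
        IsSymTensor S' ∧ symTensorRank S' ≤ ρ}}).Nonempty := by
      obtain ⟨N, lam, u, hd⟩ := BRI.sym_finite_symrank S hSsym
      exact ⟨N, subset_closure ⟨hSsym, BRI.symTensorRank_le ⟨lam, u, hd⟩⟩⟩
    exact BRI.mem_of_nat_sInf_le hne
      (fun a b ha hab => closure_mono
        (fun X (hX : IsSymTensor X ∧ symTensorRank X ≤ a) =>
          (⟨hX.1, le_trans hX.2 hab⟩ : IsSymTensor X ∧ symTensorRank X ≤ b)) ha) hH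
  -- Step 5: recover `T` from `S` and transport the closure membership back
  have hT_eq : BRI.m1 Q (BRI.m2 Q (BRI.m3 Q S)) = T := by
    rw [hSdef]
    rw [BRI.m3_m1, BRI.m3_m2, BRI.m3_m3, BRI.m3_id hR hA3, BRI.m2_m1, BRI.m2_m2,
      BRI.m2_id hR hA2, BRI.m1_m1, BRI.m1_id hR hA1]
  have hTfinal : T ∈ closure {S' : Fin n → Fin n → Fin n → ℂ |
      IsSymTensor S' ∧ symTensorRank S' ≤ r} := by
    have hQcont : Continuous
        (fun U : Fin r → Fin r → Fin r → ℂ => BRI.m1 Q (BRI.m2 Q (BRI.m3 Q U))) :=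
      (BRI.m1_continuous Q).comp ((BRI.m2_continuous Q).comp (BRI.m3_continuous Q))
    rw [← hT_eq]
    refine BRI.closure_transport hQcont ?_ hSsymcl
    intro U hU
    obtain ⟨lam, u, hd⟩ := BRI.exists_symdecomp_of_le hU.1 hU.2
    have h3 := BRI.m3_decomp Q lam u u u hd
    have h2 := BRI.m2_decomp Q _ u _ _ h3
    have h1 := BRI.m1_decomp Q _ _ _ _ h2
    have hdec : ∃ (lam' : Fin r → ℂ) (u' : Fin r → Fin n → ℂ),
        ∀ i j k, BRI.m1 Q (BRI.m2 Q (BRI.m3 Q U)) i j k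
          = ∑ s, lam' s * (u' s i * u' s j * u' s k) :=
      ⟨lam, fun s => Q.mulVec (u s), h1⟩
    exact ⟨BRI.sym_of_symdecomp hdec, BRI.symTensorRank_le hdec⟩
  exact Nat.sInf_le hTfinal
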